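/- Any matrix X₂ ∈ ℝ^{m×(n−k)} satisfies rank(X₁ X₂) ≤ r (for given X₁ ∈ ℝ^{m×k} with rank(X₁) = k ≤ r) if and only if X₂ can be written as X₂ = X₁C + BD for some matrices C ∈ ℝ^{k×(n−k)}, B ∈ ℝ^{m×(r−k)}, and D ∈ ℝ^{(r−k)×(n−k)}. -/

import Mathlib

open Matrix Filter Topology

noncomputable def frobSq {α β : Type*} [Fintype α] [Fintype β] (A : Matrix α β ℝ) : ℝ :=
  ∑ i, ∑ j, (A i j) ^ 2

noncomputable def frob {α β : Type*} [Fintype α] [Fintype β] (A : Matrix α β ℝ) : ℝ :=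
  Real.sqrt (frobSq A)
/-- rank(X₁ X₂) ≤ r iff X₂ = X₁C + BD for some C, B, D, when rank(X₁) = k ≤ r. -/
theorem stmt6 {m k nk r : ℕ} (hkr : k ≤ r)
    (X₁ : Matrix (Fin m) (Fin k) ℝ) (hrank : X₁.rank = k)
    (X₂ : Matrix (Fin m) (Fin nk) ℝ) :
    (Matrix.fromCols X₁ X₂).rank ≤ r ↔
      ∃ (C : Matrix (Fin k) (Fin nk) ℝ) (B : Matrix (Fin m) (Fin (r - k)) ℝ)
        (D : Matrix (Fin (r - k)) (Fin nk) ℝ), X₂ = X₁ * C + B * D := by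
  constructor
  · intro hr
    -- V : column space of (X₁ X₂), U : column space of X₁
    set V : Submodule ℝ (Fin m → ℝ) := LinearMap.range (fromCols X₁ X₂).mulVecLin with hV
    set U : Submodule ℝ (Fin m → ℝ) := LinearMap.range X₁.mulVecLin with hU
    have hUV : U ≤ V := by
      rintro x ⟨v, rfl⟩
      exact ⟨Sum.elim v 0, by simp [Matrix.mulVecLin_apply]⟩
    -- complement of U inside V
    obtain ⟨W', hW'⟩ := Submodule.exists_isCompl (U.comap V.subtype)
    set W : Submodule ℝ (Fin m → ℝ) := W'.map V.subtype with hW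
    have hdimsum : Module.finrank ℝ (U.comap V.subtype) + Module.finrank ℝ W' =
        Module.finrank ℝ V := Submodule.finrank_add_eq_of_isCompl hW'
    have hUcomap : Module.finrank ℝ (U.comap V.subtype) = k := by
      have h1 : (U.comap V.subtype).map V.subtype = U := by
        rw [Submodule.map_comap_subtype, inf_eq_right.mpr hUV]
      have := Submodule.finrank_map_subtype_eq V (U.comap V.subtype)
      rw [h1] at this
      rw [← this]
      exact hrank
    have hdimW : Module.finrank ℝ W ≤ r - k := by
      have h1 : Module.finrank ℝ W = Module.finrank ℝ W' :=
        Submodule.finrank_map_subtype_eq V W'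
      have h2 : Module.finrank ℝ V ≤ r := hr
      omega
    -- a family of vectors spanning W, indexed by Fin (r - k)
    set d := Module.finrank ℝ W with hd
    let bW : Module.Basis (Fin d) ℝ W := Module.finBasis ℝ W
    set b : Fin (r - k) → (Fin m → ℝ) := fun l =>
      if h : (l : ℕ) < d then (bW ⟨l, h⟩ : Fin m → ℝ) else 0 with hbdef
    have hWspan : W ≤ Submodule.span ℝ (Set.range b) := by
      intro x hx
      have : (⟨x, hx⟩ : W) ∈ Submodule.span ℝ (Set.range bW) := by
        rw [Module.Basis.span_eq]; trivial
      have hmap := Submodule.mem_map_of_mem (f := W.subtype) this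
      rw [← Submodule.span_image] at hmap
      refine Submodule.span_mono ?_ hmap
      rintro y ⟨_, ⟨i, rfl⟩, rfl⟩
      refine ⟨⟨(i : ℕ), by omega⟩, ?_⟩
      simp only [hbdef]
      rw [dif_pos i.2]
      rfl
    -- each column of X₂ lies in U ⊔ span b
    have hcol : ∀ j, (fun i => X₂ i j) ∈ U ⊔ Submodule.span ℝ (Set.range b) := by
      intro j
      have hmem : (fun i => X₂ i j) ∈ V := by
        refine ⟨Sum.elim 0 (Pi.single j 1), ?_⟩
        simp [Matrix.mulVecLin_apply, Matrix.mulVec_single, Matrix.col_apply']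
      have hVle : V ≤ U ⊔ Submodule.span ℝ (Set.range b) := by
        have : V = U ⊔ W := by
          have : (U.comap V.subtype) ⊔ W' = ⊤ := hW'.sup_eq_top
          have h2 := congrArg (Submodule.map V.subtype) this
          rw [Submodule.map_sup, Submodule.map_comap_subtype,
            inf_eq_right.mpr hUV, Submodule.map_subtype_top] at h2
          exact h2.symm
        rw [this]
        exact sup_le_sup_left hWspan U
      exact hVle hmem
    have hdecomp : ∀ j, ∃ (c : Fin k → ℝ) (dv : Fin (r - k) → ℝ),
        (fun i => X₂ i j) = X₁ *ᵥ c + ∑ l, dv l • b l := by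
      intro j
      obtain ⟨u, hu, w, hw, huw⟩ := Submodule.mem_sup.mp (hcol j)
      obtain ⟨c, rfl⟩ := hu
      rw [Finsupp.mem_span_range_iff_exists_finsupp] at hw
      obtain ⟨dv, rfl⟩ := hw
      refine ⟨c, fun l => dv l, ?_⟩
      rw [← huw, Finsupp.sum_fintype _ _ (by simp)]
      rfl
    choose cc dd hcd using hdecomp
    refine ⟨Matrix.of fun i j => cc j i, Matrix.of fun i l => b l i,
      Matrix.of fun l j => dd j l, ?_⟩
    ext i j
    have := congrFun (hcd j) i
    simp only [Pi.add_apply, Finset.sum_apply, Pi.smul_apply, smul_eq_mul] at this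
    rw [Matrix.add_apply, Matrix.mul_apply, Matrix.mul_apply, this]
    simp only [Matrix.of_apply]
    congr 1
    exact Finset.sum_congr rfl fun _ _ => mul_comm _ _
  · rintro ⟨C, B, D, rfl⟩
    have key : fromCols X₁ (X₁ * C + B * D) =
        fromCols X₁ B * fromBlocks 1 C 0 D := by
      rw [fromCols_mul_fromBlocks]
      simp
    rw [key]
    calc (fromCols X₁ B * fromBlocks 1 C 0 D).rank
        ≤ (fromCols X₁ B).rank := Matrix.rank_mul_le_left _ _
      _ ≤ Fintype.card (Fin k ⊕ Fin (r - k)) := Matrix.rank_le_card_width _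
      _ = r := by simp [Nat.add_sub_cancel' hkr]
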